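/- The conditional pmf of the Multi-Poisson vector given the sum of independent non-central chi-squared variables: if M_i ∼ Poisson(λ_i/2) independent and Y_i' | M ∼ χ²_{2α_i + 2M_i} independent for i = 1,…,D+1 with Y'⁺ = Σ_i Y_i', then Pr(M = j | Y'⁺ = y) = [₀F₁(α⁺; yλ⁺/4)]^{-1} · (α⁺)_{j⁺}^{-1} · Π_{i=1}^{D+1} (yλ_i/4)^{j_i}/j_i!, where α⁺ = Σα_i, λ⁺ = Σλ_i, j⁺ = Σj_i. -/

import Mathlib

noncomputable def poch (a : ℝ) (n : ℕ) : ℝ := (ascPochhammer ℝ n).eval a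

/-- The generalized hypergeometric function ₀F₁(b;x). -/
noncomputable def F01 (b x : ℝ) : ℝ := ∑' i : ℕ, x ^ i / (poch b i * (i.factorial : ℝ))

/-- The Poisson(μ) probability mass function. -/
noncomputable def poissonPmf (μ : ℝ) (j : ℕ) : ℝ :=
  Real.exp (-μ) * μ ^ j / (j.factorial : ℝ)

/-- The chi-squared density with 2a degrees of freedom, parametrized by a = g/2. -/
noncomputable def chiSqPdf (a y : ℝ) : ℝ :=
  y ^ (a - 1) * Real.exp (-y / 2) / (Real.Gamma a * 2 ^ a)

lemma poch_zero (b : ℝ) : poch b 0 = 1 := by simp [poch]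

lemma poch_succ (b : ℝ) (n : ℕ) : poch b (n + 1) = poch b n * (b + n) :=
  ascPochhammer_succ_eval n b

lemma poch_pos {b : ℝ} (hb : 0 < b) (n : ℕ) : 0 < poch b n :=
  ascPochhammer_pos n b hb

lemma min_le_poch {b : ℝ} (hb : 0 < b) (n : ℕ) : min b 1 ≤ poch b n := by
  induction n with
  | zero => simp [poch_zero]
  | succ n ih =>
    rw [poch_succ]
    rcases Nat.eq_zero_or_pos n with h | h
    · subst h; simp [poch_zero]
    · have h1 : (1 : ℝ) ≤ b + n := by
        have : (1 : ℝ) ≤ (n : ℝ) := by exact_mod_cast h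
        linarith
      calc min b 1 = min b 1 * 1 := by ring
        _ ≤ poch b n * (b + n) :=
          mul_le_mul ih h1 one_pos.le (poch_pos hb n).le

lemma Gamma_add_nat {b : ℝ} (hb : 0 < b) (n : ℕ) :
    Real.Gamma (b + n) = Real.Gamma b * poch b n := by
  induction n with
  | zero => simp [poch_zero]
  | succ n ih =>
    have hbn : b + (n : ℝ) ≠ 0 := by positivity
    have h : b + ((n + 1 : ℕ) : ℝ) = (b + n) + 1 := by push_cast; ring
    rw [h, Real.Gamma_add_one hbn, ih, poch_succ]; ring

lemma summable_F01_terms {b : ℝ} (hb : 0 < b) (x : ℝ) (hx : 0 ≤ x) :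
    Summable fun n : ℕ => x ^ n / (poch b n * (n.factorial : ℝ)) := by
  have hc : 0 < min b 1 := lt_min hb one_pos
  have hmaj : Summable fun n : ℕ => (min b 1)⁻¹ * (x ^ n / (n.factorial : ℝ)) :=
    (Real.summable_pow_div_factorial x).mul_left _
  refine hmaj.of_nonneg_of_le (fun n => by
    exact div_nonneg (pow_nonneg hx n)
      (mul_nonneg (poch_pos hb n).le (Nat.cast_nonneg _))) (fun n => ?_)
  have h1 : x ^ n / (poch b n * (n.factorial : ℝ)) ≤ x ^ n / (min b 1 * (n.factorial : ℝ)) := by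
    gcongr
    · exact min_le_poch hb n
  refine h1.trans_eq ?_
  have hf : (0:ℝ) < (n.factorial : ℝ) := by exact_mod_cast n.factorial_pos
  field_simp

lemma F01_pos {b : ℝ} (hb : 0 < b) (x : ℝ) (hx : 0 ≤ x) : 0 < F01 b x := by
  refine Summable.tsum_pos (summable_F01_terms hb x hx)
    (fun n => div_nonneg (pow_nonneg hx n)
      (mul_nonneg (poch_pos hb n).le (Nat.cast_nonneg _))) 0 ?_
  simp [poch_zero]

open Finset in
lemma fiber_sum (m : ℕ) (X : Fin m → ℝ) (n : ℕ) :
    ∑ k ∈ piAntidiag (univ : Finset (Fin m)) n, ∏ i, X i ^ k i / ((k i).factorial : ℝ)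
      = (∑ i, X i) ^ n / (n.factorial : ℝ) := by
  rw [Finset.sum_pow_eq_sum_piAntidiag, Finset.sum_div]
  refine Finset.sum_congr rfl fun k hk => ?_
  rw [Finset.mem_piAntidiag] at hk
  have hsum : ∑ i, k i = n := hk.1
  have hspec := Nat.multinomial_spec (univ : Finset (Fin m)) k
  rw [hsum] at hspec
  have key : ((Nat.multinomial univ k : ℝ)) * ∏ i, ((k i).factorial : ℝ) = (n.factorial : ℝ) := by
    rw [← Nat.cast_prod, ← Nat.cast_mul, mul_comm, hspec]
  have hP : (0:ℝ) < ∏ i, ((k i).factorial : ℝ) :=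
    Finset.prod_pos fun i _ => by exact_mod_cast (k i).factorial_pos
  have hf : (0:ℝ) < (n.factorial : ℝ) := by exact_mod_cast n.factorial_pos
  rw [Finset.prod_div_distrib]
  rw [div_eq_div_iff hP.ne' hf.ne']
  calc (∏ i, X i ^ k i) * (n.factorial : ℝ)
      = (∏ i, X i ^ k i) * ((Nat.multinomial univ k : ℝ) * ∏ i, ((k i).factorial : ℝ)) := by
        rw [key]
    _ = (Nat.multinomial univ k : ℝ) * (∏ i, X i ^ k i) * ∏ i, ((k i).factorial : ℝ) := by ring

open Finset in
lemma key_hasSum (m : ℕ) {b : ℝ} (hb : 0 < b) (X : Fin m → ℝ) (hX : ∀ i, 0 ≤ X i) :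
    HasSum (fun k : Fin m → ℕ =>
        (∏ i, X i ^ k i / ((k i).factorial : ℝ)) / poch b (∑ i, k i))
      (F01 b (∑ i, X i)) := by
  set g : (Fin m → ℕ) → ℝ :=
    fun k => (∏ i, X i ^ k i / ((k i).factorial : ℝ)) / poch b (∑ i, k i) with hgdef
  have hg0 : ∀ k, 0 ≤ g k := fun k =>
    div_nonneg (prod_nonneg fun i _ => div_nonneg (pow_nonneg (hX i) _) (Nat.cast_nonneg _))
      (poch_pos hb _).le
  have hfib : ∀ n : ℕ,
      HasSum (fun k : {k : Fin m → ℕ // ∑ i, k i = n} => g k.1)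
        ((∑ i, X i) ^ n / (poch b n * (n.factorial : ℝ))) := by
    intro n
    let eqn : {k : Fin m → ℕ // ∑ i, k i = n} ≃ ↥(piAntidiag (univ : Finset (Fin m)) n) :=
      Equiv.subtypeEquivRight (fun k => by simp [Finset.mem_piAntidiag])
    have h1 : HasSum (fun k : ↥(piAntidiag (univ : Finset (Fin m)) n) => g k.1)
        (∑ k ∈ piAntidiag (univ : Finset (Fin m)) n, g k) := by
      have := hasSum_fintype (fun k : ↥(piAntidiag (univ : Finset (Fin m)) n) => g k.1)
      rwa [Finset.sum_coe_sort] at this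
    have h2 : ∑ k ∈ piAntidiag (univ : Finset (Fin m)) n, g k
        = (∑ i, X i) ^ n / (poch b n * (n.factorial : ℝ)) := by
      have hc : ∀ k ∈ piAntidiag (univ : Finset (Fin m)) n,
          g k = (∏ i, X i ^ k i / ((k i).factorial : ℝ)) / poch b n := by
        intro k hk
        rw [hgdef]
        simp only
        rw [(Finset.mem_piAntidiag.mp hk).1]
      rw [Finset.sum_congr rfl hc, ← Finset.sum_div, fiber_sum, div_div,
        mul_comm ((n.factorial : ℝ)) _]
    rw [h2] at h1
    exact eqn.hasSum_iff.mpr h1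
  have hσ : Summable (fun p : (Σ n : ℕ, {k : Fin m → ℕ // ∑ i, k i = n}) => g p.2.1) := by
    rw [summable_sigma_of_nonneg (fun p => hg0 _)]
    refine ⟨fun n => (hfib n).summable, ?_⟩
    refine Summable.congr (summable_F01_terms hb (∑ i, X i) (sum_nonneg fun i _ => hX i)) fun n => ?_
    exact ((hfib n).tsum_eq).symm
  let e := Equiv.sigmaFiberEquiv (fun k : Fin m → ℕ => ∑ i, k i)
  have hgsum : Summable g := e.summable_iff.mp hσ
  have ht : ∑' k, g k = F01 b (∑ i, X i) := by
    have t1 : ∑' k, g k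
        = ∑' p : (Σ n : ℕ, {k : Fin m → ℕ // ∑ i, k i = n}), g p.2.1 :=
      (Equiv.tsum_eq e g).symm
    rw [t1, Summable.tsum_sigma hσ]
    exact tsum_congr fun n => (hfib n).tsum_eq
  exact ht ▸ hgsum.hasSum


theorem multiPoisson_conditional_given_sum (D : ℕ)
    (α lam : Fin (D + 1) → ℝ) (hα : ∀ i, 0 < α i) (hlam : ∀ i, 0 ≤ lam i)
    (y : ℝ) (hy : 0 < y) (j : Fin (D + 1) → ℕ) :
    (∏ i, poissonPmf (lam i / 2) (j i)) * chiSqPdf ((∑ i, α i) + (∑ i, j i)) y /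
        (∑' k : Fin (D + 1) → ℕ,
          (∏ i, poissonPmf (lam i / 2) (k i)) * chiSqPdf ((∑ i, α i) + (∑ i, k i)) y) =
      (F01 (∑ i, α i) (y * (∑ i, lam i) / 4))⁻¹ * (poch (∑ i, α i) (∑ i, j i))⁻¹ *
        ∏ i, (y * lam i / 4) ^ (j i) / ((j i).factorial : ℝ) := by
  have hb : 0 < ∑ i, α i := Finset.sum_pos (fun i _ => hα i) Finset.univ_nonempty
  set b := ∑ i, α i with hbdef
  have hXnn : ∀ i, 0 ≤ y * lam i / 4 := fun i =>
    div_nonneg (mul_nonneg hy.le (hlam i)) (by norm_num)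
  have hsumX : ∑ i, y * lam i / 4 = y * (∑ i, lam i) / 4 := by
    rw [← Finset.sum_div, ← Finset.mul_sum]
  have hF := key_hasSum (D + 1) hb (fun i => y * lam i / 4) hXnn
  rw [hsumX] at hF
  set C := Real.exp (-(∑ i, lam i) / 2) *
    (y ^ (b - 1) * Real.exp (-y / 2) / (Real.Gamma b * 2 ^ b)) with hCdef
  have hC : 0 < C := by
    have h1 : (0:ℝ) < y ^ (b - 1) := Real.rpow_pos_of_pos hy _
    have h2 : (0:ℝ) < (2:ℝ) ^ b := Real.rpow_pos_of_pos two_pos _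
    have h3 := Real.Gamma_pos_of_pos hb
    positivity
  have hrw : ∀ k : Fin (D + 1) → ℕ,
      (∏ i, poissonPmf (lam i / 2) (k i)) * chiSqPdf (b + ((∑ i, k i : ℕ) : ℝ)) y
        = C * ((∏ i, (y * lam i / 4) ^ k i / ((k i).factorial : ℝ)) / poch b (∑ i, k i)) := by
    intro k
    set n := ∑ i, k i with hn
    unfold poissonPmf chiSqPdf
    have e1 : y ^ (b + (n : ℝ) - 1) = y ^ (b - 1) * y ^ n := by
      rw [show b + (n : ℝ) - 1 = (b - 1) + (n : ℝ) from by ring, Real.rpow_add hy,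
        Real.rpow_natCast]
    have e2 : (2 : ℝ) ^ (b + (n : ℝ)) = 2 ^ b * 2 ^ n := by
      rw [Real.rpow_add two_pos, Real.rpow_natCast]
    have e3 : Real.Gamma (b + (n : ℝ)) = Real.Gamma b * poch b n := Gamma_add_nat hb n
    have e4 : ∏ i, Real.exp (-(lam i / 2)) = Real.exp (-(∑ i, lam i) / 2) := by
      rw [← Real.exp_sum]
      congr 1
      simp [neg_div, Finset.sum_div, Finset.sum_neg_distrib]
    have e5 : ∏ i, (Real.exp (-(lam i / 2)) * (lam i / 2) ^ k i / ((k i).factorial : ℝ))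
        = Real.exp (-(∑ i, lam i) / 2) * ∏ i, ((lam i / 2) ^ k i / ((k i).factorial : ℝ)) := by
      rw [← e4, ← Finset.prod_mul_distrib]
      exact Finset.prod_congr rfl fun i _ => (mul_div_assoc _ _ _)
    have e6 : ∏ i, ((y * lam i / 4) ^ k i / ((k i).factorial : ℝ))
        = (y / 2) ^ n * ∏ i, ((lam i / 2) ^ k i / ((k i).factorial : ℝ)) := by
      rw [hn, ← Finset.prod_pow_eq_pow_sum, ← Finset.prod_mul_distrib]
      refine Finset.prod_congr rfl fun i _ => ?_
      rw [show y * lam i / 4 = (y / 2) * (lam i / 2) from by ring, mul_pow, mul_div_assoc]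
    rw [e5, e1, e2, e3, e6, hCdef]
    have h3 := Real.Gamma_pos_of_pos hb
    have hpoch := poch_pos hb n
    have h2 : (0:ℝ) < (2:ℝ) ^ b := Real.rpow_pos_of_pos two_pos _
    have h2n : (0:ℝ) < (2:ℝ) ^ n := by positivity
    rw [div_pow]
    field_simp
  have hden : (∑' k : Fin (D + 1) → ℕ,
      (∏ i, poissonPmf (lam i / 2) (k i)) * chiSqPdf (b + ((∑ i, k i : ℕ) : ℝ)) y)
        = C * F01 b (y * (∑ i, lam i) / 4) := by
    rw [tsum_congr hrw, tsum_mul_left, hF.tsum_eq]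
  rw [hden, hrw j]
  have hpoch : 0 < poch b (∑ i, j i) := poch_pos hb _
  have hFpos : 0 < F01 b (y * (∑ i, lam i) / 4) :=
    F01_pos hb _ (div_nonneg (mul_nonneg hy.le (Finset.sum_nonneg fun i _ => hlam i)) (by norm_num))
  rw [mul_div_mul_left _ _ hC.ne']
  rw [div_div, div_eq_mul_inv, mul_inv]
  ring
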